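/- Let N ≥ 1 and fix radii 0 < R₁ < R₂ < … < R_{N+1} = R, a path-loss exponent α > 0, reader transmit power P_T > 0, noise power 𝒩 > 0, and SINR threshold γ > 0. Suppose the reflection coefficients satisfy 0 < ξ_N ≤ ξ_{N-1} ≤ … ≤ ξ₁ ≤ 1, ξ_N ≥ γ·𝒩·R^{2α}/P_T, and for every i ≤ N−1, ξ_i ≥ γ·(∑_{j=i+1}^{N} ξ_j·R_{i+1}^{2α}/R_j^{2α} + 𝒩·R_{i+1}^{2α}/P_T). Then for every choice of distances r_j ∈ [R_j, R_{j+1}] (j = 1,…,N) and for every i ∈ {1,…,N}, the SINR of the i-th signal satisfies P_T·ξ_i·r_i^{−2α} / (∑_{j=i+1}^{N} P_T·ξ_j·r_j^{−2α} + 𝒩) ≥ γ (where the sum is empty for i = N, so this is the SNR condition P_T·ξ_N·r_N^{−2α}/𝒩 ≥ γ). In other words, under these reflection-coefficient conditions every multiplexed backscatter node is successfully decoded by successive interference cancellation. -/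

import Mathlib

open Finset Set

/-- Under the reflection-coefficient selection criteria, every multiplexed
backscatter node is successfully decoded by successive interference cancellation:
for all distances `r j ∈ [R j, R (j+1)]` and all `i ∈ {1,…,N}`, the SINR of the `i`-th
signal is at least the threshold `γ`. Here `R (N+1)` plays the role of the outer radius
`R`, and powers are via real exponentiation (path-loss exponent `2α`). -/
theorem backcom_selection_criteria_all_decoded
    (N : ℕ) (hN : 1 ≤ N) (R ξ : ℕ → ℝ) (α PT Noise γ : ℝ)
    (hα : 0 < α) (hPT : 0 < PT) (hNoise : 0 < Noise) (hγ : 0 < γ)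
    (hR1 : 0 < R 1)
    (hRmono : ∀ i, 1 ≤ i → i ≤ N → R i < R (i + 1))
    (hξN : 0 < ξ N)
    (hξanti : ∀ i, 1 ≤ i → i ≤ N - 1 → ξ (i + 1) ≤ ξ i)
    (hξ1 : ξ 1 ≤ 1)
    (hξNlb : γ * Noise * R (N + 1) ^ (2 * α) / PT ≤ ξ N)
    (hξlb : ∀ i, 1 ≤ i → i ≤ N - 1 →
      γ * ((∑ j ∈ Finset.Icc (i + 1) N, ξ j * R (i + 1) ^ (2 * α) / R j ^ (2 * α))
        + Noise * R (i + 1) ^ (2 * α) / PT) ≤ ξ i)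
    (r : ℕ → ℝ) (hr : ∀ j, 1 ≤ j → j ≤ N → r j ∈ Set.Icc (R j) (R (j + 1)))
    (i : ℕ) (hi1 : 1 ≤ i) (hiN : i ≤ N) :
    γ ≤ PT * ξ i * r i ^ (-(2 * α)) /
      ((∑ j ∈ Finset.Icc (i + 1) N, PT * ξ j * r j ^ (-(2 * α))) + Noise) := by
  have hPT' : PT ≠ 0 := ne_of_gt hPT
  have h2α : (0:ℝ) < 2 * α := by linarith
  -- positivity of the radii
  have hRpos : ∀ j, 1 ≤ j → j ≤ N + 1 → 0 < R j := by
    intro j hj1 hjN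
    induction j with
    | zero => omega
    | succ k ih =>
      rcases Nat.lt_or_ge k 1 with h | h
      · have : k + 1 = 1 := by omega
        rw [this]; exact hR1
      · exact lt_trans (ih h (by omega)) (hRmono k h (by omega))
  have hrpos : ∀ j, 1 ≤ j → j ≤ N → 0 < r j := fun j h1 h2 =>
    lt_of_lt_of_le (hRpos j h1 (by omega)) (hr j h1 h2).1
  -- positivity of reflection coefficients
  have hξge : ∀ d, d ≤ N - 1 → 0 < ξ (N - d) := by
    intro d hd
    induction d with
    | zero => simpa using hξN
    | succ k ih =>
      have h1 : 1 ≤ N - (k + 1) := by omega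
      have h2 := hξanti (N - (k + 1)) h1 (by omega)
      have heq : N - (k + 1) + 1 = N - k := by omega
      rw [heq] at h2
      exact lt_of_lt_of_le (ih (by omega)) h2
  have hξpos : ∀ j, 1 ≤ j → j ≤ N → 0 < ξ j := by
    intro j h1 h2
    have := hξge (N - j) (by omega)
    rwa [Nat.sub_sub_self h2] at this
  -- the interference sum is nonnegative
  have hterm : ∀ j ∈ Finset.Icc (i + 1) N, 0 ≤ PT * ξ j * r j ^ (-(2 * α)) := by
    intro j hj
    rw [Finset.mem_Icc] at hj
    have hj1 : 1 ≤ j := by omega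
    have := hrpos j hj1 hj.2
    have := hξpos j hj1 hj.2
    have := Real.rpow_pos_of_pos (hrpos j hj1 hj.2) (-(2 * α))
    positivity
  have hSnn : 0 ≤ ∑ j ∈ Finset.Icc (i + 1) N, PT * ξ j * r j ^ (-(2 * α)) :=
    Finset.sum_nonneg hterm
  have hden : 0 < (∑ j ∈ Finset.Icc (i + 1) N, PT * ξ j * r j ^ (-(2 * α))) + Noise := by
    linarith
  rw [le_div_iff₀ hden]
  -- monotonicity of the signal term in r i
  have hrI := hr i hi1 hiN
  have hRi1 : 0 < R (i + 1) := hRpos (i + 1) (by omega) (by omega)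
  have hri : 0 < r i := hrpos i hi1 hiN
  have hmono : R (i + 1) ^ (-(2 * α)) ≤ r i ^ (-(2 * α)) :=
    Real.rpow_le_rpow_of_nonpos hri hrI.2 (by linarith)
  have hsig : PT * ξ i * R (i + 1) ^ (-(2 * α)) ≤ PT * ξ i * r i ^ (-(2 * α)) :=
    mul_le_mul_of_nonneg_left hmono (mul_nonneg hPT.le (hξpos i hi1 hiN).le)
  have hQ : 0 < R (i + 1) ^ (2 * α) := Real.rpow_pos_of_pos hRi1 _
  have hQinv : R (i + 1) ^ (-(2 * α)) = (R (i + 1) ^ (2 * α))⁻¹ := by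
    rw [Real.rpow_neg hRi1.le]
  rcases eq_or_lt_of_le hiN with hEq | hLt
  · -- i = N : empty interference sum
    subst hEq
    rw [Finset.Icc_eq_empty (by omega), Finset.sum_empty]
    have key : γ * Noise * R (i + 1) ^ (2 * α) ≤ ξ i * PT := by
      rw [div_le_iff₀ hPT] at hξNlb; linarith
    have h1 : γ * Noise ≤ PT * ξ i * R (i + 1) ^ (-(2 * α)) := by
      rw [hQinv, ← div_eq_mul_inv, le_div_iff₀ hQ]; linarith
    calc γ * (0 + Noise) = γ * Noise := by ring
      _ ≤ PT * ξ i * R (i + 1) ^ (-(2 * α)) := h1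
      _ ≤ PT * ξ i * r i ^ (-(2 * α)) := hsig
  · -- i < N
    have hiN1 : i ≤ N - 1 := by omega
    have key := hξlb i hi1 hiN1
    set A := ∑ j ∈ Finset.Icc (i + 1) N, ξ j * R (i + 1) ^ (2 * α) / R j ^ (2 * α) with hA
    set B := ∑ j ∈ Finset.Icc (i + 1) N, PT * ξ j * (R j ^ (2 * α))⁻¹ with hB
    set S := ∑ j ∈ Finset.Icc (i + 1) N, PT * ξ j * r j ^ (-(2 * α)) with hS
    have hsum_eq : A * PT = B * R (i + 1) ^ (2 * α) := by
      rw [hA, hB, Finset.sum_mul, Finset.sum_mul]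
      refine Finset.sum_congr rfl fun j hj => ?_
      rw [Finset.mem_Icc] at hj
      have hRj : 0 < R j ^ (2 * α) :=
        Real.rpow_pos_of_pos (hRpos j (by omega) (by omega)) _
      field_simp
    have hSB : S ≤ B := by
      rw [hS, hB]
      refine Finset.sum_le_sum fun j hj => ?_
      rw [Finset.mem_Icc] at hj
      have hRj : 0 < R j := hRpos j (by omega) (by omega)
      have hmj : r j ^ (-(2 * α)) ≤ (R j ^ (2 * α))⁻¹ := by
        rw [← Real.rpow_neg hRj.le]
        exact Real.rpow_le_rpow_of_nonpos hRj (hr j (by omega) hj.2).1 (by linarith)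
      exact mul_le_mul_of_nonneg_left hmj
        (mul_nonneg hPT.le (hξpos j (by omega) hj.2).le)
    have key' : γ * (A * PT + Noise * R (i + 1) ^ (2 * α)) ≤ ξ i * PT := by
      have h := mul_le_mul_of_nonneg_right key hPT.le
      calc γ * (A * PT + Noise * R (i + 1) ^ (2 * α))
          = γ * (A + Noise * R (i + 1) ^ (2 * α) / PT) * PT := by field_simp
        _ ≤ ξ i * PT := h
    have key'' : γ * (B + Noise) * R (i + 1) ^ (2 * α) ≤ ξ i * PT := by
      rw [hsum_eq] at key'
      calc γ * (B + Noise) * R (i + 1) ^ (2 * α)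
          = γ * (B * R (i + 1) ^ (2 * α) + Noise * R (i + 1) ^ (2 * α)) := by ring
        _ ≤ ξ i * PT := key'
    have h2 : γ * (B + Noise) ≤ PT * ξ i * R (i + 1) ^ (-(2 * α)) := by
      rw [hQinv, ← div_eq_mul_inv, le_div_iff₀ hQ]
      linarith
    have hγB : γ * (S + Noise) ≤ γ * (B + Noise) :=
      mul_le_mul_of_nonneg_left (by linarith) hγ.le
    calc γ * (S + Noise) ≤ γ * (B + Noise) := hγB
      _ ≤ PT * ξ i * R (i + 1) ^ (-(2 * α)) := h2
      _ ≤ PT * ξ i * r i ^ (-(2 * α)) := hsig
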